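/- Let F : ℝ → ℝ be twice differentiable with second derivative everywhere strictly positive, and let D_F(x, y) = F(x) - F(y) - (x - y) * (deriv F y). Then for any x ∈ ℝ and any a ≤ b, the infimum over y ∈ [a, b] of D_F(x, y) equals 0 if and only if x ∈ [a, b]. -/

import Mathlib

/-- The Bregman divergence generated by a differentiable function `F : ℝ → ℝ`. -/
noncomputable def bregman (F : ℝ → ℝ) (x y : ℝ) : ℝ :=
  F x - F y - (x - y) * deriv F y

lemma bregman_pos_of_ne (F : ℝ → ℝ)
    (hF : Differentiable ℝ F) (hF' : Differentiable ℝ (deriv F))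
    (hF'' : ∀ y, 0 < deriv (deriv F) y) {x y : ℝ} (hxy : x ≠ y) :
    0 < bregman F x y := by
  have hmono : StrictMono (deriv F) := strictMono_of_deriv_pos hF''
  rcases lt_or_gt_of_ne hxy with h | h
  · -- x < y
    obtain ⟨c, hc, hceq⟩ := exists_deriv_eq_slope F h
      (hF.continuous.continuousOn) (hF.differentiableOn)
    have hslope : F y - F x = deriv F c * (y - x) :=
      (div_eq_iff (by linarith : y - x ≠ 0)).mp hceq.symm
    have hlt : deriv F c < deriv F y := hmono hc.2
    have : (y - x) * deriv F c < (y - x) * deriv F y :=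
      mul_lt_mul_of_pos_left hlt (by linarith)
    unfold bregman; nlinarith
  · -- y < x
    obtain ⟨c, hc, hceq⟩ := exists_deriv_eq_slope F h
      (hF.continuous.continuousOn) (hF.differentiableOn)
    have hslope : F x - F y = deriv F c * (x - y) :=
      (div_eq_iff (by linarith : x - y ≠ 0)).mp hceq.symm
    have hlt : deriv F y < deriv F c := hmono hc.1
    have : (x - y) * deriv F y < (x - y) * deriv F c :=
      mul_lt_mul_of_pos_left hlt (by linarith)
    unfold bregman; nlinarith

theorem sInf_bregman_eq_zero_iff (F : ℝ → ℝ)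
    (hF : Differentiable ℝ F) (hF' : Differentiable ℝ (deriv F))
    (hF'' : ∀ y, 0 < deriv (deriv F) y)
    (x a b : ℝ) (hab : a ≤ b) :
    sInf ((fun y => bregman F x y) '' Set.Icc a b) = 0 ↔ x ∈ Set.Icc a b := by
  have hnonneg : ∀ y, 0 ≤ bregman F x y := by
    intro y
    rcases eq_or_ne x y with rfl | h
    · simp [bregman]
    · exact (bregman_pos_of_ne F hF hF' hF'' h).le
  have hne : (Set.Icc a b).Nonempty := ⟨a, le_refl a, hab⟩
  have hcont : Continuous fun y => bregman F x y := by
    unfold bregman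
    have := hF.continuous; have := hF'.continuous; fun_prop
  have hcomp : IsCompact ((fun y => bregman F x y) '' Set.Icc a b) :=
    (isCompact_Icc).image hcont
  have hSne : ((fun y => bregman F x y) '' Set.Icc a b).Nonempty := hne.image _
  constructor
  · intro h0
    by_contra hx
    have hmem : sInf ((fun y => bregman F x y) '' Set.Icc a b) ∈
        (fun y => bregman F x y) '' Set.Icc a b := hcomp.sInf_mem hSne
    obtain ⟨y, hy, hyeq⟩ := hmem
    have hxy : x ≠ y := fun h => hx (h ▸ hy)
    have hpos := bregman_pos_of_ne F hF hF' hF'' hxy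
    simp only at hyeq
    rw [h0] at hyeq
    linarith
  · intro hx
    have h0mem : (0 : ℝ) ∈ (fun y => bregman F x y) '' Set.Icc a b :=
      ⟨x, hx, by simp [bregman]⟩
    have hbdd : BddBelow ((fun y => bregman F x y) '' Set.Icc a b) :=
      ⟨0, fun z ⟨y, _, hz⟩ => hz ▸ hnonneg y⟩
    exact le_antisymm (csInf_le hbdd h0mem)
      (le_csInf hSne fun z ⟨y, _, hz⟩ => hz ▸ hnonneg y)
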